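/- Let k ≥ 1 and let σ_0, σ_1, ..., σ_l be as above (interior coordinates i.i.d. uniform on [k], independent of endpoints). Define ω(x,y) = k-1 if x=y and -1 otherwise. Then E[∏_{i=1}^{l} ω(σ_{i-1}, σ_i) | σ_0, σ_l] = ω(σ_0, σ_l). -/

import Mathlib

open Finset
open Fin.NatCast

/-- `ω(x,y) = k-1` if `x = y` and `-1` otherwise. -/
def omega (k : ℕ) (x y : Fin k) : ℝ := if x = y then (k : ℝ) - 1 else -1

/-- Sum over paths with fixed endpoints of the product of `ω` along the path. -/
noncomputable def pathSum (k l : ℕ) (x y : Fin k) : ℝ :=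
  ∑ σ ∈ Finset.univ.filter
      (fun σ : Fin (l + 1) → Fin k => σ 0 = x ∧ σ (Fin.last l) = y),
    ∏ i ∈ Finset.range l, omega k (σ ↑i) (σ ↑(i + 1))

lemma omega_sum (k : ℕ) (x y : Fin k) :
    ∑ z : Fin k, omega k x z * omega k z y = k * omega k x y := by
  have hdel : ∀ a b : Fin k, omega k a b = k * (if a = b then (1:ℝ) else 0) - 1 := by
    intro a b; unfold omega; split <;> simp
  simp only [hdel]
  simp [sub_mul, mul_sub, Finset.sum_sub_distrib, Finset.mul_sum, mul_ite, ite_mul,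
    Finset.sum_ite_eq, Finset.sum_ite_eq', Fin.pos_iff_nonempty]

lemma pathSum_zero (k : ℕ) (x y : Fin k) :
    pathSum k 0 x y = if x = y then 1 else 0 := by
  unfold pathSum
  rw [Finset.sum_filter]
  rw [← Fintype.sum_equiv (Equiv.funUnique (Fin 1) (Fin k)).symm
    (fun z => if z = x ∧ z = y then (1:ℝ) else 0)
    (fun σ => if σ 0 = x ∧ σ (Fin.last 0) = y then
      ∏ i ∈ Finset.range 0, omega k (σ ↑i) (σ ↑(i + 1)) else 0)
    (fun z => by simp [Equiv.funUnique, Fin.last])]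
  rcases eq_or_ne x y with rfl | h
  · simp
  · simp only [Finset.sum_ite_eq, if_neg h, Finset.sum_boole]
    rw [Finset.filter_eq_empty_iff.mpr (fun z _ => by rintro ⟨rfl, rfl⟩; exact h rfl)]
    simp

lemma pathSum_succ (k l : ℕ) (x y : Fin k) :
    pathSum k (l+1) x y = ∑ w : Fin k, omega k x w * pathSum k l w y := by
  unfold pathSum
  rw [Finset.sum_filter]
  rw [← Fintype.sum_equiv (Fin.consEquiv (fun _ : Fin (l+2) => Fin k))
      (fun p => if p.1 = x ∧ p.2 (Fin.last l) = y then
          omega k p.1 (p.2 0) * ∏ i ∈ Finset.range l, omega k (p.2 ↑i) (p.2 ↑(i+1)) else 0)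
      (fun σ => if σ 0 = x ∧ σ (Fin.last (l+1)) = y then
          ∏ i ∈ Finset.range (l+1), omega k (σ ↑i) (σ ↑(i+1)) else 0)
      ?_]
  · rw [Fintype.sum_prod_type]
    rw [Finset.sum_eq_single x
      (fun w _ hw => by simp [Finset.sum_ite_of_false, hw])
      (fun h => absurd (Finset.mem_univ x) h)]
    simp only [Finset.sum_filter, Finset.mul_sum]
    rw [Finset.sum_comm]
    refine Finset.sum_congr rfl fun τ _ => ?_
    simp [ite_and, mul_ite, Finset.sum_ite_eq]
  · rintro ⟨w, τ⟩
    have hlast : (Fin.last (l+1)) = Fin.succ (Fin.last l) := rfl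
    simp only [Fin.consEquiv_apply]
    have hcons : ∀ j : Fin (l+1), Fin.cons (α := fun _ : Fin (l+2) => Fin k) w τ j.succ = τ j :=
      fun j => by simp
    have hzero : Fin.cons (α := fun _ : Fin (l+2) => Fin k) w τ 0 = w := rfl
    have hcast : ∀ i : ℕ, i ≤ l → ((i+1 : ℕ) : Fin (l+2)) = Fin.succ ((i : ℕ) : Fin (l+1)) := by
      intro i h; ext
      rw [Fin.val_succ, Fin.val_cast_of_lt (by omega), Fin.val_cast_of_lt (by omega)]
    simp only [hlast, hcons, hzero]
    congr 1
    rw [Finset.prod_range_succ' (fun i => omega k (Fin.cons (α := fun _ : Fin (l+2) => Fin k) w τ ↑i) (Fin.cons (α := fun _ : Fin (l+2) => Fin k) w τ ↑(i+1))) l, mul_comm]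
    congr 1
    refine Finset.prod_congr rfl fun i hi => ?_
    have hi' := Finset.mem_range.mp hi
    rw [hcast (i+1) (by omega), hcast i (by omega), hcons, hcons]

lemma pathSum_eq (k : ℕ) : ∀ (l : ℕ) (x y : Fin k),
    pathSum k (l+1) x y = (k:ℝ)^l * omega k x y := by
  intro l
  induction l with
  | zero =>
    intro x y
    rw [pathSum_succ]
    simp [pathSum_zero, mul_ite, Finset.sum_ite_eq']
  | succ n ih =>
    intro x y
    rw [pathSum_succ]
    simp only [ih]
    calc ∑ w : Fin k, omega k x w * ((k:ℝ)^n * omega k w y)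
        = (k:ℝ)^n * ∑ w : Fin k, omega k x w * omega k w y := by
          rw [Finset.mul_sum]; exact Finset.sum_congr rfl fun w _ => by ring
      _ = (k:ℝ)^(n+1) * omega k x y := by rw [omega_sum]; ring

/-- Conditional expectation of `∏_{i=1}^l ω(σ_{i-1}, σ_i)` given the endpoints
`σ_0 = x`, `σ_l = y`, where the interior coordinates are i.i.d. uniform on `[k]`,
equals `ω(x,y)`. -/
theorem path_omega_conditional_expectation (k l : ℕ) (hk : 1 ≤ k) (hl : 1 ≤ l)
    (x y : Fin k) :
    (1 / (k : ℝ) ^ (l - 1)) *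
      ∑ σ ∈ Finset.univ.filter
          (fun σ : Fin (l + 1) → Fin k => σ 0 = x ∧ σ (Fin.last l) = y),
        ∏ i ∈ Finset.range l, omega k (σ ↑i) (σ ↑(i + 1))
      = omega k x y := by
  obtain ⟨m, rfl⟩ := Nat.exists_eq_succ_of_ne_zero (by omega : l ≠ 0)
  have h := pathSum_eq k m x y
  unfold pathSum at h
  rw [h, Nat.succ_sub_one]
  have hk0 : (k:ℝ) ≠ 0 := by positivity
  field_simp
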